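/- Let G be a connected simple graph whose vertex set is partitioned into two cliques A and B with |A| = |B| ≥ 2, such that there is exactly one edge of G with one endpoint in A and the other in B. Then svcfc(G) = |A| + 1. -/

import Mathlib

open SimpleGraph

/-- `f` is a strong conflict-free vertex-connection coloring of `G`: any two distinct
vertices are joined by a shortest path on which some color occurs exactly once. -/
def IsSCFVC {V α : Type*} [DecidableEq α] (G : SimpleGraph V) (f : V → α) : Prop :=
  ∀ u v : V, u ≠ v → ∃ p : G.Walk u v, p.length = G.dist u v ∧
    ∃ c : α, (p.support.map f).count c = 1

/-- The strong conflict-free vertex-connection number. -/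
noncomputable def svcfc {V : Type*} (G : SimpleGraph V) : ℕ :=
  sInf {k | ∃ f : V → Fin k, IsSCFVC G f}

private lemma cnt2 {α} [DecidableEq α] (p q : α) (h : p ≠ q) : ([p, q].count p) = 1 := by
  simp [List.count_cons, h]

private lemma cnt3a {α} [DecidableEq α] (p q c : α) (h1 : p ≠ c) (h2 : q ≠ c) :
    ([p, c, q].count c) = 1 := by
  simp [List.count_cons, h1, h2]

private lemma cnt3b {α} [DecidableEq α] (p q c : α) (h1 : p ≠ c) (h2 : q ≠ c) :
    ([p, q, c].count c) = 1 := by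
  simp [List.count_cons, h1, h2]

private lemma cnt4 {α} [DecidableEq α] (p q r c : α) (h1 : p ≠ c) (h2 : q ≠ c) (h3 : r ≠ c) :
    ([p, q, c, r].count c) = 1 := by
  simp [List.count_cons, h1, h2, h3]

private lemma no_unique1 {α} [DecidableEq α] (p q c : α) : [p, q, p, q].count c ≠ 1 := by
  simp only [List.count_cons, List.count_nil]
  split_ifs <;> simp_all

private lemma no_unique2 {α} [DecidableEq α] (p q c : α) : [p, q, q, p].count c ≠ 1 := by
  simp only [List.count_cons, List.count_nil]
  split_ifs <;> simp_all

private lemma no_unique0 {α} [DecidableEq α] (d c : α) : [d, d].count c ≠ 1 := by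
  simp only [List.count_cons, List.count_nil]
  split_ifs <;> simp_all

private lemma walk_cases {V : Type*} {G : SimpleGraph V} {u v : V} (p : G.Walk u v)
    (h : p.length ≤ 3) :
    (p.length = 0 ∧ u = v) ∨
    (p.length = 1 ∧ G.Adj u v ∧ p.support = [u, v]) ∨
    (p.length = 2 ∧ ∃ w, G.Adj u w ∧ G.Adj w v ∧ p.support = [u, w, v]) ∨
    (p.length = 3 ∧ ∃ w z, G.Adj u w ∧ G.Adj w z ∧ G.Adj z v ∧ p.support = [u, w, z, v]) := by
  match p with
  | .nil => exact Or.inl ⟨rfl, rfl⟩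
  | .cons h1 .nil => exact Or.inr (Or.inl ⟨rfl, h1, by simp⟩)
  | .cons h1 (.cons h2 .nil) => exact Or.inr (Or.inr (Or.inl ⟨rfl, _, h1, h2, by simp⟩))
  | .cons h1 (.cons h2 (.cons h3 .nil)) =>
      exact Or.inr (Or.inr (Or.inr ⟨rfl, _, _, h1, h2, h3, by simp⟩))
  | .cons _ (.cons _ (.cons _ (.cons _ q))) => simp [SimpleGraph.Walk.length_cons] at h; omega

/-- The explicit coloring used for the upper bound. -/
private noncomputable def myColor {V : Type*} [DecidableEq V] (A B : Finset V) (y : V)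
    (h : A.card = B.card) : V → Fin (A.card + 1) := fun v =>
  if hv : v ∈ A then Fin.castLE (Nat.le_succ _) (A.equivFin ⟨v, hv⟩)
  else if hv' : v ∈ B then
    (if v = y then Fin.last A.card
     else Fin.castLE (Nat.le_succ _) (Fin.cast h.symm (B.equivFin ⟨v, hv'⟩)))
  else Fin.last A.card

private lemma myColor_A {V : Type*} [DecidableEq V] {A B : Finset V} {y : V}
    {h : A.card = B.card} {a : V} (ha : a ∈ A) :
    myColor A B y h a = Fin.castLE (Nat.le_succ _) (A.equivFin ⟨a, ha⟩) := by
  simp [myColor, ha]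

private lemma myColor_y {V : Type*} [DecidableEq V] {A B : Finset V} {y : V}
    {h : A.card = B.card} (hy : y ∈ B) (hyA : y ∉ A) :
    myColor A B y h y = Fin.last A.card := by
  simp [myColor, hy, hyA]

private lemma myColor_B {V : Type*} [DecidableEq V] {A B : Finset V} {y : V}
    {h : A.card = B.card} {b : V} (hb : b ∈ B) (hbA : b ∉ A) (hby : b ≠ y) :
    myColor A B y h b = Fin.castLE (Nat.le_succ _) (Fin.cast h.symm (B.equivFin ⟨b, hb⟩)) := by
  simp [myColor, hb, hbA, hby]

/-- Let `G` be connected, partitioned into two cliques `A`, `B` with `|A| = |B| ≥ 2` and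
exactly one edge between `A` and `B`. Then `svcfc(G) = |A| + 1`. -/
theorem stmt17 {V : Type*} [Fintype V] [DecidableEq V] (G : SimpleGraph V)
    (hG : G.Connected) (A B : Finset V)
    (hdisj : Disjoint A B) (huniv : A ∪ B = Finset.univ)
    (hA : ∀ u ∈ A, ∀ v ∈ A, u ≠ v → G.Adj u v)
    (hB : ∀ u ∈ B, ∀ v ∈ B, u ≠ v → G.Adj u v)
    (hcard : A.card = B.card) (h2 : 2 ≤ A.card)
    (x y : V) (hx : x ∈ A) (hy : y ∈ B) (hxy : G.Adj x y)
    (huniq : ∀ x' ∈ A, ∀ y' ∈ B, G.Adj x' y' → x' = x ∧ y' = y) :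
    svcfc G = A.card + 1 := by
  classical
  -- basic membership facts
  have memAB : ∀ v : V, v ∈ A ∨ v ∈ B := by
    intro v
    have : v ∈ A ∪ B := huniv ▸ Finset.mem_univ v
    exact Finset.mem_union.mp this
  have hne : ∀ a ∈ A, ∀ b ∈ B, a ≠ b := by
    intro a ha b hb e
    exact (Finset.disjoint_left.mp hdisj ha) (e ▸ hb)
  have hnAB : ∀ a ∈ A, a ∉ B := fun a ha => Finset.disjoint_left.mp hdisj ha
  have hnBA : ∀ b ∈ B, b ∉ A := fun b hb => Finset.disjoint_right.mp hdisj hb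
  have cross : ∀ a ∈ A, ∀ b ∈ B, G.Adj a b → a = x ∧ b = y := huniq
  have crossB : ∀ b ∈ B, ∀ a ∈ A, G.Adj b a → a = x ∧ b = y := by
    intro b hb a ha h; exact cross a ha b hb h.symm
  have adjY : ∀ b ∈ B, b ≠ y → G.Adj y b := fun b hb h => hB y hy b hb (fun e => h e.symm)
  have adjX : ∀ a ∈ A, a ≠ x → G.Adj a x := fun a ha h => hA a ha x hx h
  -- structure of short walks between non-bridge endpoints
  have supp3 : ∀ a ∈ A, a ≠ x → ∀ b ∈ B, b ≠ y → ∀ p : G.Walk a b, p.length ≤ 3 →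
      p.length = 3 ∧ p.support = [a, x, y, b] := by
    intro a ha hax b hb hby p hp
    rcases walk_cases p hp with ⟨_, he⟩ | ⟨_, hadj, _⟩ | ⟨_, w, h1', h2', _⟩ |
      ⟨h3, w, z, hw, hwz, hz, hs⟩
    · exact absurd he (hne a ha b hb)
    · exact absurd (cross a ha b hb hadj).1 hax
    · rcases memAB w with hwA | hwB
      · exact absurd (cross w hwA b hb h2').2 hby
      · exact absurd (cross a ha w hwB h1').1 hax
    · have hwA : w ∈ A := by
        rcases memAB w with h | h
        · exact h
        · exact absurd (cross a ha w h hw).1 hax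
      have hzB : z ∈ B := by
        rcases memAB z with h | h
        · exact absurd (cross z h b hb hz).2 hby
        · exact h
      obtain ⟨hwx, hzy⟩ := cross w hwA z hzB hwz
      subst hwx; subst hzy
      exact ⟨h3, hs⟩
  have distAB : ∀ a ∈ A, a ≠ x → ∀ b ∈ B, b ≠ y → G.dist a b = 3 := by
    intro a ha hax b hb hby
    have hle : G.dist a b ≤ 3 := by
      simpa using SimpleGraph.dist_le
        (Walk.cons (adjX a ha hax) (Walk.cons hxy (Walk.cons (adjY b hb hby) Walk.nil)))
    obtain ⟨p, hp⟩ := hG.exists_walk_length_eq_dist a b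
    have := (supp3 a ha hax b hb hby p (by omega)).1
    omega
  have distAy : ∀ a ∈ A, a ≠ x → G.dist a y = 2 := by
    intro a ha hax
    have hle : G.dist a y ≤ 2 := by
      simpa using SimpleGraph.dist_le (Walk.cons (adjX a ha hax) (Walk.cons hxy Walk.nil))
    have h0 : G.dist a y ≠ 0 := by
      have := hG.pos_dist_of_ne (hne a ha y hy); omega
    have h1 : G.dist a y ≠ 1 := by
      intro h
      exact hax (cross a ha y hy (SimpleGraph.dist_eq_one_iff_adj.mp h)).1
    omega
  have distxB : ∀ b ∈ B, b ≠ y → G.dist x b = 2 := by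
    intro b hb hby
    have hle : G.dist x b ≤ 2 := by
      simpa using SimpleGraph.dist_le (Walk.cons hxy (Walk.cons (adjY b hb hby) Walk.nil))
    have h0 : G.dist x b ≠ 0 := by
      have := hG.pos_dist_of_ne (hne x hx b hb); omega
    have h1 : G.dist x b ≠ 1 := by
      intro h
      exact hby (cross x hx b hb (SimpleGraph.dist_eq_one_iff_adj.mp h)).2
    omega
  -- the coloring for the upper bound
  set f : V → Fin (A.card + 1) := myColor A B y hcard with hf_def
  have hvalA : ∀ a ∈ A, (f a).val < A.card := by
    intro a ha
    rw [hf_def, myColor_A ha]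
    exact (A.equivFin ⟨a, ha⟩).isLt
  have hvalB : ∀ b ∈ B, b ≠ y → (f b).val < A.card := by
    intro b hb hby
    rw [hf_def, myColor_B hb (hnBA b hb) hby]
    have := (B.equivFin ⟨b, hb⟩).isLt
    simpa [hcard] using this
  have hfy : f y = Fin.last A.card := myColor_y hy (hnBA y hy)
  have hfy_ne : ∀ a ∈ A, f a ≠ f y := by
    intro a ha e
    have := hvalA a ha
    rw [e, hfy] at this
    simp at this
  have hfyB_ne : ∀ b ∈ B, b ≠ y → f b ≠ f y := by
    intro b hb hby e
    have := hvalB b hb hby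
    rw [e, hfy] at this
    simp at this
  have injA : ∀ a1 ∈ A, ∀ a2 ∈ A, f a1 = f a2 → a1 = a2 := by
    intro a1 h1 a2 h2 he
    rw [hf_def, myColor_A h1, myColor_A h2] at he
    have : (A.equivFin ⟨a1, h1⟩) = (A.equivFin ⟨a2, h2⟩) := by
      apply Fin.ext
      simpa using congrArg Fin.val he
    have := A.equivFin.injective this
    simpa using congrArg Subtype.val this
  have injB : ∀ b1 ∈ B, ∀ b2 ∈ B, f b1 = f b2 → b1 = b2 := by
    intro b1 h1 b2 h2 he
    by_cases e1 : b1 = y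
    · by_cases e2 : b2 = y
      · rw [e1, e2]
      · exact absurd (e1 ▸ he).symm (hfyB_ne b2 h2 e2)
    · by_cases e2 : b2 = y
      · exact absurd (e2 ▸ he) (hfyB_ne b1 h1 e1)
      · rw [hf_def, myColor_B h1 (hnBA b1 h1) e1, myColor_B h2 (hnBA b2 h2) e2] at he
        have : (B.equivFin ⟨b1, h1⟩) = (B.equivFin ⟨b2, h2⟩) := by
          apply Fin.ext
          simpa using congrArg Fin.val he
        have := B.equivFin.injective this
        simpa using congrArg Subtype.val this
  -- a walk and its data can be reversed
  have symm_case : ∀ u v : V,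
      (∃ p : G.Walk u v, p.length = G.dist u v ∧ ∃ c, (p.support.map f).count c = 1) →
      (∃ p : G.Walk v u, p.length = G.dist v u ∧ ∃ c, (p.support.map f).count c = 1) := by
    rintro u v ⟨p, hl, c, hc⟩
    refine ⟨p.reverse, ?_, c, ?_⟩
    · rw [Walk.length_reverse, SimpleGraph.dist_comm]; exact hl
    · rw [Walk.support_reverse, List.map_reverse, List.count_reverse]; exact hc
  -- clique pairs
  have clique_case : ∀ u v : V, u ≠ v → G.Adj u v →
      (∃ p : G.Walk u v, p.length = G.dist u v ∧ ∃ c, (p.support.map f).count c = 1) →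
        True := fun _ _ _ _ _ => trivial
  have same_clique : ∀ u v : V, G.Adj u v → f u ≠ f v →
      ∃ p : G.Walk u v, p.length = G.dist u v ∧ ∃ c, (p.support.map f).count c = 1 := by
    intro u v hadj hfne
    refine ⟨Walk.cons hadj Walk.nil, ?_, f u, ?_⟩
    · simp [SimpleGraph.dist_eq_one_iff_adj.mpr hadj]
    · simpa using cnt2 (f u) (f v) hfne
  have hfAB_ne : ∀ a ∈ A, ∀ b ∈ B, b ≠ y → a ≠ b → True := fun _ _ _ _ _ _ => trivial
  -- the coloring is a SCFVC coloring
  have hSCF : IsSCFVC G f := by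
    intro u v huv
    have key : ∀ u v : V, u ∈ A → v ∈ B → u ≠ v →
        ∃ p : G.Walk u v, p.length = G.dist u v ∧ ∃ c, (p.support.map f).count c = 1 := by
      intro u v hu hv _
      by_cases hux : u = x
      · subst hux
        by_cases hvy : v = y
        · subst hvy
          exact same_clique u v hxy (hfy_ne u hu)
        · -- x to b : path x-y-v
          refine ⟨Walk.cons hxy (Walk.cons (adjY v hv hvy) Walk.nil), ?_, Fin.last A.card, ?_⟩
          · simp [distxB v hv hvy]
          · have e1 : f u ≠ Fin.last A.card := by
              intro e; have := hvalA u hu; rw [e] at this; simp at this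
            have e2 : f v ≠ Fin.last A.card := by
              intro e; have := hvalB v hv hvy; rw [e] at this; simp at this
            simpa [hfy] using cnt3a (f u) (f v) (Fin.last A.card) e1 e2
      · by_cases hvy : v = y
        · subst hvy
          -- a to y : path u-x-y
          refine ⟨Walk.cons (adjX u hu hux) (Walk.cons hxy Walk.nil), ?_, Fin.last A.card, ?_⟩
          · simp [distAy u hu hux]
          · have e1 : f u ≠ Fin.last A.card := by
              intro e; have := hvalA u hu; rw [e] at this; simp at this
            have e2 : f x ≠ Fin.last A.card := by
              intro e; have := hvalA x hx; rw [e] at this; simp at this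
            simpa [hfy] using cnt3b (f u) (f x) (Fin.last A.card) e1 e2
        · -- a to b : path u-x-y-v
          refine ⟨Walk.cons (adjX u hu hux) (Walk.cons hxy (Walk.cons (adjY v hv hvy) Walk.nil)),
            ?_, Fin.last A.card, ?_⟩
          · simp [distAB u hu hux v hv hvy]
          · have e1 : f u ≠ Fin.last A.card := by
              intro e; have := hvalA u hu; rw [e] at this; simp at this
            have e2 : f x ≠ Fin.last A.card := by
              intro e; have := hvalA x hx; rw [e] at this; simp at this
            have e3 : f v ≠ Fin.last A.card := by
              intro e; have := hvalB v hv hvy; rw [e] at this; simp at this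
            simpa [hfy] using cnt4 (f u) (f x) (f v) (Fin.last A.card) e1 e2 e3
    rcases memAB u with hu | hu <;> rcases memAB v with hv | hv
    · exact same_clique u v (hA u hu v hv huv) (fun e => huv (injA u hu v hv e))
    · exact key u v hu hv huv
    · exact symm_case v u (key v u hv hu (Ne.symm huv))
    · exact same_clique u v (hB u hu v hv huv) (fun e => huv (injB u hu v hv e))
  have hmem : (A.card + 1) ∈ {k | ∃ f : V → Fin k, IsSCFVC G f} := ⟨f, hSCF⟩
  -- lower bound
  have lower : ∀ k ∈ {k | ∃ f : V → Fin k, IsSCFVC G f}, A.card + 1 ≤ k := by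
    rintro k ⟨g, hg⟩
    by_contra hcon
    push_neg at hcon
    -- injectivity of g on adjacent pairs
    have adj_ne : ∀ u v : V, G.Adj u v → g u ≠ g v := by
      intro u v hadj he
      obtain ⟨p, hl, c, hc⟩ := hg u v hadj.ne
      rw [SimpleGraph.dist_eq_one_iff_adj.mpr hadj] at hl
      rcases walk_cases p (by omega) with ⟨h0, _⟩ | ⟨_, _, hs⟩ | ⟨h2', _⟩ | ⟨h3', _⟩
      · omega
      · rw [hs] at hc
        simp only [List.map_cons, List.map_nil] at hc
        rw [he] at hc
        exact no_unique0 (g v) c hc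
      · omega
      · omega
    have ginjA : ∀ a1 ∈ A, ∀ a2 ∈ A, g a1 = g a2 → a1 = a2 := by
      intro a1 h1 a2 h2 he
      by_contra hne'
      exact adj_ne a1 a2 (hA a1 h1 a2 h2 hne') he
    have ginjB : ∀ b1 ∈ B, ∀ b2 ∈ B, g b1 = g b2 → b1 = b2 := by
      intro b1 h1 b2 h2 he
      by_contra hne'
      exact adj_ne b1 b2 (hB b1 h1 b2 h2 hne') he
    have hAk : A.card ≤ k := by
      have := Finset.card_le_card_of_injOn g (fun a _ => Finset.mem_univ (g a))
        (fun a ha b hb => ginjA a ha b hb)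
      simpa using this
    have hk : k = A.card := by omega
    -- g is surjective from A and from B onto Fin k
    have surjA : ∀ c : Fin k, ∃ a ∈ A, g a = c := by
      intro c
      have h1 : (A.image g).card = A.card := Finset.card_image_of_injOn
        (fun a ha b hb => ginjA a ha b hb)
      have h2 : A.image g = Finset.univ := Finset.eq_univ_of_card _ (by rw [h1, Fintype.card_fin]; omega)
      have : c ∈ A.image g := h2 ▸ Finset.mem_univ c
      obtain ⟨a, ha, he⟩ := Finset.mem_image.mp this
      exact ⟨a, ha, he⟩
    have surjB : ∀ c : Fin k, ∃ b ∈ B, g b = c := by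
      intro c
      have h1 : (B.image g).card = B.card := Finset.card_image_of_injOn
        (fun a ha b hb => ginjB a ha b hb)
      have h2 : B.image g = Finset.univ := Finset.eq_univ_of_card _ (by rw [h1, Fintype.card_fin]; omega)
      have : c ∈ B.image g := h2 ▸ Finset.mem_univ c
      obtain ⟨b, hb, he⟩ := Finset.mem_image.mp this
      exact ⟨b, hb, he⟩
    -- the crucial bad pair
    have badpair : ∀ a ∈ A, a ≠ x → ∀ b ∈ B, b ≠ y →
        ∃ c : Fin k, ([g a, g x, g y, g b].count c) = 1 := by
      intro a ha hax b hb hby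
      obtain ⟨p, hl, c, hc⟩ := hg a b (hne a ha b hb)
      rw [distAB a ha hax b hb hby] at hl
      obtain ⟨_, hs⟩ := supp3 a ha hax b hb hby p (by omega)
      rw [hs] at hc
      exact ⟨c, by simpa using hc⟩
    by_cases hgxy : g x = g y
    · obtain ⟨a', ha', hax'⟩ := Finset.exists_mem_ne (s := A) (by omega) x
      obtain ⟨b', hb', hgb'⟩ := surjB (g a')
      have hby' : b' ≠ y := by
        intro e
        rw [e, ← hgxy] at hgb'
        exact hax' (ginjA a' ha' x hx hgb'.symm)
      obtain ⟨c, hc⟩ := badpair a' ha' hax' b' hb' hby'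
      rw [hgb', ← hgxy] at hc
      exact no_unique2 (g a') (g x) c hc
    · obtain ⟨a, ha, hga⟩ := surjA (g y)
      obtain ⟨b, hb, hgb⟩ := surjB (g x)
      have hax : a ≠ x := by intro e; rw [e] at hga; exact hgxy hga
      have hby : b ≠ y := by intro e; rw [e] at hgb; exact hgxy hgb.symm
      obtain ⟨c, hc⟩ := badpair a ha hax b hb hby
      rw [hga, hgb] at hc
      exact no_unique1 (g y) (g x) c hc
  exact le_antisymm (Nat.sInf_le hmem) (le_csInf ⟨_, hmem⟩ lower)
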